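/- Let H be a complex Hilbert space, h ∈ H, and L a nonempty set of closed (linear) subspaces of H. Then the quantum consequence operation C defined by b ∈ C(A) iff A*_p(h) ∈ b is an L-logics: it satisfies Inclusion (A ⊆ C(A) for all A ⊆ L) and Loop (for every n ≥ 1 and every family A_0, …, A_{n-1} of subsets of L with A_i ⊆ C(A_{i+1 mod n}) for all i, all the sets C(A_0), …, C(A_{n-1}) are equal). -/

import Mathlib

/-- The orthogonal projection onto a closed subspace `K` of a complex Hilbert space,
as a map `H → H`: `projPt K hK x` is the point of `K` closest to `x`. -/
noncomputable def projPt {H : Type*} [NormedAddCommGroup H] [InnerProductSpace ℂ H]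
    [CompleteSpace H] (K : Submodule ℂ H) (hK : IsClosed (K : Set H)) (x : H) : H :=
  haveI : CompleteSpace K := hK.completeSpace_coe
  (K.orthogonalProjectionOnto x : H)

/-- `Astar Lset A` is `A*`: the intersection of all the subspaces belonging to
`A ⊆ Lset` (equal to `H` when `A = ∅`). -/
noncomputable def Astar {H : Type*} [NormedAddCommGroup H] [InnerProductSpace ℂ H]
    [CompleteSpace H] (Lset : Set (Submodule ℂ H)) (A : Set ↥Lset) : Submodule ℂ H :=
  sInf ((fun k : ↥Lset => (k : Submodule ℂ H)) '' A)

/-- `A*` is a closed subspace. -/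
lemma isClosed_Astar {H : Type*} [NormedAddCommGroup H] [InnerProductSpace ℂ H]
    [CompleteSpace H] {Lset : Set (Submodule ℂ H)}
    (hL : ∀ K ∈ Lset, IsClosed (K : Set H)) (A : Set ↥Lset) :
    IsClosed ((Astar Lset A : Submodule ℂ H) : Set H) := by
  rw [Astar, Submodule.coe_sInf]
  refine isClosed_biInter ?_
  rintro K ⟨k, hk, rfl⟩
  exact hL k k.2

/-- The intersection of two closed subspaces is closed. -/
lemma isClosed_inf {H : Type*} [NormedAddCommGroup H] [InnerProductSpace ℂ H]
    [CompleteSpace H] {K K' : Submodule ℂ H}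
    (h : IsClosed (K : Set H)) (h' : IsClosed (K' : Set H)) :
    IsClosed ((K ⊓ K' : Submodule ℂ H) : Set H) := by
  rw [Submodule.coe_inf]
  exact h.inter h'

/-- The quantum consequence operation of Engesser and Gabbay determined by the state
`h`: `b ∈ C(A)` iff the projection of `h` on `A*` belongs to `b`. -/
noncomputable def qC {H : Type*} [NormedAddCommGroup H] [InnerProductSpace ℂ H]
    [CompleteSpace H] (Lset : Set (Submodule ℂ H))
    (hL : ∀ K ∈ Lset, IsClosed (K : Set H)) (h : H) (A : Set ↥Lset) : Set ↥Lset :=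
  {b | projPt (Astar Lset A) (isClosed_Astar hL A) h ∈ (b : Submodule ℂ H)}


open InnerProductSpace in
lemma projPt_mem' {H : Type*} [NormedAddCommGroup H] [InnerProductSpace ℂ H]
    [CompleteSpace H] (K : Submodule ℂ H) (hK : IsClosed (K : Set H)) (x : H) :
    projPt K hK x ∈ K := by
  haveI : CompleteSpace K := hK.completeSpace_coe
  exact (K.orthogonalProjectionOnto x).2

open InnerProductSpace in
lemma projPt_sq' {H : Type*} [NormedAddCommGroup H] [InnerProductSpace ℂ H]
    [CompleteSpace H] (K : Submodule ℂ H) (hK : IsClosed (K : Set H)) (x w : H)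
    (hw : w ∈ K) :
    ‖x - w‖ ^ 2 = ‖x - projPt K hK x‖ ^ 2 + ‖projPt K hK x - w‖ ^ 2 := by
  haveI : CompleteSpace K := hK.completeSpace_coe
  set P := projPt K hK x with hP
  have h1 : x - P ∈ Kᗮ := Submodule.sub_starProjection_mem_orthogonal (K := K) x
  have h2 : P - w ∈ K := K.sub_mem (projPt_mem' K hK x) hw
  have h3 : ⟪x - P, P - w⟫_ℂ = 0 :=
    Submodule.inner_left_of_mem_orthogonal h2 h1
  have hns := norm_add_sq (𝕜 := ℂ) (x - P) (P - w)
  simp only [h3, map_zero] at hns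
  have hx : x - w = (x - P) + (P - w) := by abel
  rw [hx, hns]; ring

/-- Minimality of the projection. -/
lemma projPt_min' {H : Type*} [NormedAddCommGroup H] [InnerProductSpace ℂ H]
    [CompleteSpace H] (K : Submodule ℂ H) (hK : IsClosed (K : Set H)) (x w : H)
    (hw : w ∈ K) : ‖x - projPt K hK x‖ ≤ ‖x - w‖ := by
  have h := projPt_sq' K hK x w hw
  nlinarith [norm_nonneg (x - projPt K hK x), norm_nonneg (x - w),
    sq_nonneg ‖projPt K hK x - w‖]

/-- Uniqueness of the closest point. -/
lemma projPt_uniq' {H : Type*} [NormedAddCommGroup H] [InnerProductSpace ℂ H]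
    [CompleteSpace H] (K : Submodule ℂ H) (hK : IsClosed (K : Set H)) (x w : H)
    (hw : w ∈ K) (hle : ‖x - w‖ ≤ ‖x - projPt K hK x‖) : w = projPt K hK x := by
  have h := projPt_sq' K hK x w hw
  have h0 : ‖projPt K hK x - w‖ = 0 := by
    nlinarith [norm_nonneg (x - projPt K hK x), norm_nonneg (x - w),
      norm_nonneg (projPt K hK x - w)]
  have := norm_sub_eq_zero_iff.mp h0
  exact this.symm

lemma mem_Astar_iff' {H : Type*} [NormedAddCommGroup H] [InnerProductSpace ℂ H]
    [CompleteSpace H] {Lset : Set (Submodule ℂ H)} {A : Set ↥Lset} {x : H} :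
    x ∈ Astar Lset A ↔ ∀ b ∈ A, x ∈ (b : Submodule ℂ H) := by
  simp [Astar, Submodule.mem_sInf]

/-- The quantum consequence operation is an L-logics: it satisfies Inclusion and Loop. -/
theorem stmt_19 {H : Type*} [NormedAddCommGroup H] [InnerProductSpace ℂ H]
    [CompleteSpace H] (h : H) (Lset : Set (Submodule ℂ H)) (hLne : Lset.Nonempty)
    (hL : ∀ K ∈ Lset, IsClosed (K : Set H)) :
    (∀ A : Set ↥Lset, A ⊆ qC Lset hL h A) ∧
    (∀ n : ℕ, 1 ≤ n → ∀ A : ℕ → Set ↥Lset,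
      (∀ i < n, A i ⊆ qC Lset hL h (A ((i + 1) % n))) →
      ∀ i < n, ∀ j < n, qC Lset hL h (A i) = qC Lset hL h (A j)) := by

  classical
  set p : Set ↥Lset → H := fun A => projPt (Astar Lset A) (isClosed_Astar hL A) h with hp
  constructor
  · intro A b hb
    have : p A ∈ Astar Lset A := projPt_mem' _ _ h
    exact mem_Astar_iff'.mp this b hb
  · intro n hn A hchain
    -- the step: p (A ((i+1)%n)) ∈ Astar (A i)
    have hstep : ∀ i < n, p (A ((i + 1) % n)) ∈ Astar Lset (A i) := by
      intro i hi
      rw [mem_Astar_iff']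
      intro b hb
      exact hchain i hi hb
    have hd : ∀ i < n, ‖h - p (A i)‖ ≤ ‖h - p (A ((i + 1) % n))‖ :=
      fun i hi => projPt_min' _ _ h _ (hstep i hi)
    -- cyclic iteration: for all k, ‖h - p (A i)‖ ≤ ‖h - p (A ((i+k)%n))‖
    have hiter : ∀ k : ℕ, ∀ i < n, ‖h - p (A i)‖ ≤ ‖h - p (A ((i + k) % n))‖ := by
      intro k
      induction k with
      | zero => intro i hi; rw [Nat.add_zero, Nat.mod_eq_of_lt hi]
      | succ k ih =>
        intro i hi
        have h1 := ih i hi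
        have h2 := hd ((i + k) % n) (Nat.mod_lt _ (by omega))
        have he : ((i + k) % n + 1) % n = (i + (k + 1)) % n := by
          rw [Nat.mod_add_mod, show i + k + 1 = i + (k + 1) by ring]
        rw [he] at h2
        exact le_trans h1 h2
    have hle : ∀ i < n, ∀ j < n, ‖h - p (A i)‖ ≤ ‖h - p (A j)‖ := by
      intro i hi j hj
      by_cases hij : i ≤ j
      · have := hiter (j - i) i hi
        rwa [show i + (j - i) = j by omega, Nat.mod_eq_of_lt hj] at this
      · have := hiter (j + n - i) i hi
        rwa [show i + (j + n - i) = j + n by omega, Nat.add_mod_right,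
          Nat.mod_eq_of_lt hj] at this
    -- hence all projections are equal along an edge
    have hpe : ∀ i < n, p (A i) = p (A ((i + 1) % n)) := by
      intro i hi
      have hlt : (i + 1) % n < n := Nat.mod_lt _ (by omega)
      exact (projPt_uniq' (Astar Lset (A i)) (isClosed_Astar hL (A i)) h _
        (hstep i hi) (hle ((i + 1) % n) hlt i hi)).symm
    have hpiter : ∀ k : ℕ, ∀ i < n, p (A i) = p (A ((i + k) % n)) := by
      intro k
      induction k with
      | zero => intro i hi; rw [Nat.add_zero, Nat.mod_eq_of_lt hi]
      | succ k ih =>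
        intro i hi
        have h1 := ih i hi
        have h2 := hpe ((i + k) % n) (Nat.mod_lt _ (by omega))
        have he : ((i + k) % n + 1) % n = (i + (k + 1)) % n := by
          rw [Nat.mod_add_mod, show i + k + 1 = i + (k + 1) by ring]
        rw [he] at h2
        exact h1.trans h2
    have hpeq : ∀ i < n, ∀ j < n, p (A i) = p (A j) := by
      intro i hi j hj
      by_cases hij : i ≤ j
      · have := hpiter (j - i) i hi
        rwa [show i + (j - i) = j by omega, Nat.mod_eq_of_lt hj] at this
      · have := hpiter (j + n - i) i hi
        rwa [show i + (j + n - i) = j + n by omega, Nat.add_mod_right,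
          Nat.mod_eq_of_lt hj] at this
    intro i hi j hj
    ext b
    show p (A i) ∈ (b : Submodule ℂ H) ↔ p (A j) ∈ (b : Submodule ℂ H)
    rw [hpeq i hi j hj]
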